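/- arXiv:1808.09109 — 3 statements merged into one kernel-verified Lean document; each statement's English description precedes it below -/
import Mathlib

section
/- Let 0 < δ < 1/2 and l > 0 with δ < √2 · l. Then the kernel K_{δ,l}(r) := g_δ(r)/r³ - (r² - 2l²)/(r² + l²)^{5/2} is strictly positive for all r > 0, where g_δ(r) = 1 if r > δ and 0 otherwise. -/
/-- Positivity of the modified kernel `K_{δ,l}` when `δ < √2 · l`. -/
theorem stmt2 (δ l : ℝ) (hδ0 : 0 < δ) (hδ : δ < 1 / 2) (hl : 0 < l)
    (hδl : δ < Real.sqrt 2 * l) :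
    ∀ r : ℝ, 0 < r →
      0 < (if δ < r then (1 : ℝ) else 0) / r ^ 3
            - (r ^ 2 - 2 * l ^ 2) / (r ^ 2 + l ^ 2) ^ ((5 : ℝ) / 2) := by
  intro r hr
  have hA : (0:ℝ) < (r ^ 2 + l ^ 2) ^ ((5:ℝ)/2) :=
    Real.rpow_pos_of_pos (by positivity) _
  by_cases h : δ < r
  · simp only [if_pos h]
    rw [sub_pos, div_lt_div_iff₀ hA (by positivity)]
    have h5 : (r ^ 2 : ℝ) ^ ((5:ℝ)/2) = r ^ 5 := by
      rw [← Real.rpow_natCast r 2, ← Real.rpow_natCast r 5,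
        ← Real.rpow_mul hr.le]
      norm_num
    calc (r ^ 2 - 2 * l ^ 2) * r ^ 3 < r ^ 2 * r ^ 3 := by nlinarith [mul_pos (pow_pos hl 2) (pow_pos hr 3)]
      _ = r ^ 5 := by ring
      _ = (r ^ 2 : ℝ) ^ ((5:ℝ)/2) := h5.symm
      _ < (r ^ 2 + l ^ 2) ^ ((5:ℝ)/2) := by
          apply Real.rpow_lt_rpow (by positivity) (by nlinarith) (by norm_num)
      _ = 1 * (r ^ 2 + l ^ 2) ^ ((5:ℝ)/2) := (one_mul _).symm
  · simp only [if_neg h]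
    push_neg at h
    have hr2 : r ^ 2 < 2 * l ^ 2 := by
      have h2 : δ ^ 2 < 2 * l ^ 2 := by
        nlinarith [Real.sq_sqrt (by norm_num : (0:ℝ) ≤ 2), Real.sqrt_nonneg 2]
      nlinarith
    have hneg : (r ^ 2 - 2 * l ^ 2) / (r ^ 2 + l ^ 2) ^ ((5:ℝ)/2) < 0 :=
      div_neg_of_neg_of_pos (by linarith) hA
    simpa using hneg
end

section
/- Define h₂ : [0,1) → ℝ by h₂(t) = t − (4 − t − 2t²)E(t) + (4 − 3t − t²)K(t), where K(t) = ∫_0^{π/2} (1 − t sin²θ)^{−1/2} dθ and E(t) = ∫_0^{π/2} (1 − t sin²θ)^{1/2} dθ are complete elliptic integrals (with parameter t = k²). Then h₂(t) > 0 for all 0 < t < √(8/(3π)). -/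
open Real intervalIntegral

noncomputable section

/-- Complete elliptic integral of the first kind (parameter `t = k²`). -/
def Kell (t : ℝ) : ℝ := ∫ θ in (0 : ℝ)..(π / 2), 1 / Real.sqrt (1 - t * Real.sin θ ^ 2)

/-- Complete elliptic integral of the second kind (parameter `t = k²`). -/
def Eell (t : ℝ) : ℝ := ∫ θ in (0 : ℝ)..(π / 2), Real.sqrt (1 - t * Real.sin θ ^ 2)

end

private lemma aux_pos {t : ℝ} (ht1 : t < 1) (θ : ℝ) :
    0 < 1 - t * Real.sin θ ^ 2 := by
  nlinarith [Real.sin_sq_le_one θ, sq_nonneg (Real.sin θ), sq_nonneg t,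
    mul_self_nonneg (1 - t)]

private lemma cont_sqrt {t : ℝ} : Continuous fun θ : ℝ => Real.sqrt (1 - t * Real.sin θ ^ 2) :=
  Real.continuous_sqrt.comp (by continuity)

private lemma Eell_le {t : ℝ} (ht0 : 0 ≤ t) (ht1 : t < 1) :
    Eell t ≤ π / 2 * (1 - t / 4) := by
  have key : Eell t ≤ ∫ θ in (0:ℝ)..(π/2), (1 - t / 2 * Real.sin θ ^ 2) := by
    apply intervalIntegral.integral_mono_on (by positivity)
    · exact cont_sqrt.intervalIntegrable _ _
    · exact (by continuity : Continuous fun θ : ℝ => 1 - t / 2 * Real.sin θ ^ 2).intervalIntegrable _ _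
    · intro θ _
      have hs := Real.sin_sq_le_one θ
      have hs0 := sq_nonneg (Real.sin θ)
      have h1 : (0:ℝ) ≤ 1 - t / 2 * Real.sin θ ^ 2 := by nlinarith
      have h2 : 1 - t * Real.sin θ ^ 2 ≤ (1 - t / 2 * Real.sin θ ^ 2) ^ 2 := by
        nlinarith [sq_nonneg (t * Real.sin θ ^ 2)]
      calc Real.sqrt (1 - t * Real.sin θ ^ 2)
          ≤ Real.sqrt ((1 - t / 2 * Real.sin θ ^ 2) ^ 2) := Real.sqrt_le_sqrt h2
        _ = 1 - t / 2 * Real.sin θ ^ 2 := Real.sqrt_sq h1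
  have hval : (∫ θ in (0:ℝ)..(π/2), (1 - t / 2 * Real.sin θ ^ 2)) = π / 2 * (1 - t / 4) := by
    rw [intervalIntegral.integral_sub (Continuous.intervalIntegrable continuous_const _ _)
      (Continuous.intervalIntegrable (by continuity) _ _)]
    rw [intervalIntegral.integral_const_mul, integral_sin_sq]
    simp [Real.sin_pi_div_two, Real.cos_pi_div_two]
    ring
  linarith [key, hval.le, hval.ge]

private lemma Kell_ge {t : ℝ} (ht0 : 0 ≤ t) (ht1 : t < 1) :
    π / 2 * (1 + t / 4) ≤ Kell t := by
  have key : (∫ θ in (0:ℝ)..(π/2), (1 + t / 2 * Real.sin θ ^ 2)) ≤ Kell t := by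
    apply intervalIntegral.integral_mono_on (by positivity)
    · exact (by continuity : Continuous fun θ : ℝ => 1 + t / 2 * Real.sin θ ^ 2).intervalIntegrable _ _
    · apply Continuous.intervalIntegrable
      apply Continuous.div continuous_const cont_sqrt
      intro θ
      exact (Real.sqrt_pos.mpr (aux_pos ht1 θ)).ne'
    · intro θ _
      have hs := Real.sin_sq_le_one θ
      have hs0 := sq_nonneg (Real.sin θ)
      have hpos := aux_pos ht1 θ
      have hsp : 0 < Real.sqrt (1 - t * Real.sin θ ^ 2) := Real.sqrt_pos.mpr hpos
      rw [le_div_iff₀ hsp]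
      have h1 : (0:ℝ) < 1 + t / 2 * Real.sin θ ^ 2 := by nlinarith
      have h2 : Real.sqrt (1 - t * Real.sin θ ^ 2) ≤ Real.sqrt ((1 / (1 + t / 2 * Real.sin θ ^ 2)) ^ 2) := by
        apply Real.sqrt_le_sqrt
        rw [div_pow, le_div_iff₀ (by positivity)]
        have hx : (0:ℝ) ≤ t * Real.sin θ ^ 2 := by positivity
        nlinarith [sq_nonneg (t * Real.sin θ ^ 2), mul_nonneg (mul_nonneg hx hx) hx]
      have h3 : Real.sqrt ((1 / (1 + t / 2 * Real.sin θ ^ 2)) ^ 2) = 1 / (1 + t / 2 * Real.sin θ ^ 2) :=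
        Real.sqrt_sq (by positivity)
      rw [h3] at h2
      calc (1 + t / 2 * Real.sin θ ^ 2) * Real.sqrt (1 - t * Real.sin θ ^ 2)
          ≤ (1 + t / 2 * Real.sin θ ^ 2) * (1 / (1 + t / 2 * Real.sin θ ^ 2)) :=
            mul_le_mul_of_nonneg_left h2 h1.le
        _ = 1 := by field_simp
  have hval : (∫ θ in (0:ℝ)..(π/2), (1 + t / 2 * Real.sin θ ^ 2)) = π / 2 * (1 + t / 4) := by
    rw [intervalIntegral.integral_add (Continuous.intervalIntegrable continuous_const _ _)
      (Continuous.intervalIntegrable (by continuity) _ _)]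
    rw [intervalIntegral.integral_const_mul, integral_sin_sq]
    simp [Real.sin_pi_div_two, Real.cos_pi_div_two]
    ring
  linarith [key, hval.le]

/-- Positivity of `h₂(t) = t − (4−t−2t²)E(t) + (4−3t−t²)K(t)`
on `(0, √(8/(3π)))`. -/
theorem stmt12 :
    ∀ t : ℝ, 0 < t → t < Real.sqrt (8 / (3 * π)) →
      0 < t - (4 - t - 2 * t ^ 2) * Eell t + (4 - 3 * t - t ^ 2) * Kell t := by
  intro t ht0 htu
  have hpi := Real.pi_gt_three
  have hy : (8 / (3 * π) : ℝ) < 1 := by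
    rw [div_lt_one (by positivity)]; linarith
  have ht2 : t ^ 2 < 8 / (3 * π) := (Real.lt_sqrt ht0.le).mp htu
  have ht1 : t < 1 := by nlinarith [sq_nonneg (t - 1)]
  have hE := Eell_le ht0.le ht1
  have hK := Kell_ge ht0.le ht1
  have hc1 : (0:ℝ) < 4 - t - 2 * t ^ 2 := by nlinarith
  have hc2 : (0:ℝ) < 4 - 3 * t - t ^ 2 := by nlinarith
  have h1 : (4 - t - 2 * t ^ 2) * Eell t ≤ (4 - t - 2 * t ^ 2) * (π / 2 * (1 - t / 4)) :=
    mul_le_mul_of_nonneg_left hE hc1.le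
  have h2 : (4 - 3 * t - t ^ 2) * (π / 2 * (1 + t / 4)) ≤ (4 - 3 * t - t ^ 2) * Kell t :=
    mul_le_mul_of_nonneg_left hK hc2.le
  have hcube : 3 * π / 8 * t ^ 3 < t := by
    have : t ^ 2 * (3 * π) < 8 := (lt_div_iff₀ (by positivity)).mp ht2
    nlinarith
  nlinarith [h1, h2, hcube]
end

section
/- For every a > 0 and l > 0, lim_{m→∞} (1/m) ∫_{−am/2}^{am/2} ∫_{−am/2}^{am/2} ( 1/√((s−t)² + l²) − 1/√((s−t)² + 1/a² + l²) ) ds dt = a ∫_{−∞}^{∞} ( 1/√(s² + l²) − 1/√(s² + 1/a² + l²) ) ds = −2a log l + a log(1/a² + l²). -/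
open Real Filter intervalIntegral MeasureTheory

lemma sqrt_sq_add_pos (c : ℝ) (hc : 0 < c) (x : ℝ) : 0 < Real.sqrt (x ^ 2 + c ^ 2) :=
  Real.sqrt_pos.2 (by positivity)

lemma hda (c : ℝ) (hc : 0 < c) (x : ℝ) :
    HasDerivAt (fun u => Real.arsinh (u / c)) (1 / Real.sqrt (x ^ 2 + c ^ 2)) x := by
  have h := (Real.hasDerivAt_arsinh (x / c)).comp x ((hasDerivAt_id x).div_const c)
  refine h.congr_deriv (Eq.symm ?_)
  have h1 : Real.sqrt (1 + (x / c) ^ 2) = Real.sqrt (x ^ 2 + c ^ 2) / c := by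
    rw [show 1 + (x / c) ^ 2 = (x ^ 2 + c ^ 2) / c ^ 2 by field_simp; ring,
      Real.sqrt_div (by positivity), Real.sqrt_sq hc.le]
  rw [h1]
  have := (sqrt_sq_add_pos c hc x).ne'
  field_simp

lemma hdsqrt (c : ℝ) (hc : 0 < c) (x : ℝ) :
    HasDerivAt (fun u => Real.sqrt (u ^ 2 + c ^ 2)) (x / Real.sqrt (x ^ 2 + c ^ 2)) x := by
  have h := (Real.hasDerivAt_sqrt (x := x ^ 2 + c ^ 2) (by positivity)).comp x
    (((hasDerivAt_id x).pow 2).add_const (c ^ 2))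
  refine h.congr_deriv (Eq.symm ?_)
  simp only [id]
  field_simp
  ring

lemma hdG (c : ℝ) (hc : 0 < c) (x : ℝ) :
    HasDerivAt (fun u => u * Real.arsinh (u / c) - Real.sqrt (u ^ 2 + c ^ 2))
      (Real.arsinh (x / c)) x := by
  have h := ((hasDerivAt_id x).mul (hda c hc x)).sub (hdsqrt c hc x)
  refine h.congr_deriv (Eq.symm ?_)
  simp only [id]
  have h2 := (sqrt_sq_add_pos c hc x).ne'
  field_simp
  ring

lemma Npos (c : ℝ) (hc : 0 < c) (L : ℝ) : 0 < L + Real.sqrt (L ^ 2 + c ^ 2) := by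
  have h1 : |L| < Real.sqrt (L ^ 2 + c ^ 2) := by
    rw [← Real.sqrt_sq_eq_abs]
    exact Real.sqrt_lt_sqrt (by positivity) (by nlinarith)
  have := neg_abs_le L
  linarith

lemma arsinh_log (c : ℝ) (hc : 0 < c) (L : ℝ) :
    Real.arsinh (L / c) = Real.log (L + Real.sqrt (L ^ 2 + c ^ 2)) - Real.log c := by
  have h1 : Real.sqrt (1 + (L / c) ^ 2) = Real.sqrt (L ^ 2 + c ^ 2) / c := by
    rw [show 1 + (L / c) ^ 2 = (L ^ 2 + c ^ 2) / c ^ 2 by field_simp; ring,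
      Real.sqrt_div (by positivity), Real.sqrt_sq hc.le]
  rw [Real.arsinh, h1, show L / c + Real.sqrt (L ^ 2 + c ^ 2) / c
      = (L + Real.sqrt (L ^ 2 + c ^ 2)) / c by ring,
    Real.log_div (Npos c hc L).ne' hc.ne']

lemma tendsto_N (c : ℝ) (hc : 0 < c) :
    Tendsto (fun L : ℝ => 1 + Real.sqrt (1 + (c / L) ^ 2)) atTop (nhds 2) := by
  have h0 : Tendsto (fun L : ℝ => c / L) atTop (nhds 0) :=
    Tendsto.div_atTop tendsto_const_nhds tendsto_id
  have h1 : Tendsto (fun L : ℝ => 1 + (c / L) ^ 2) atTop (nhds 1) := by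
    have := (h0.pow 2).const_add 1
    simpa using this
  have h2 : Tendsto (fun L : ℝ => Real.sqrt (1 + (c / L) ^ 2)) atTop (nhds 1) := by
    have := (Real.continuous_sqrt.tendsto 1).comp h1
    simpa [Function.comp_def] using this
  have := h2.const_add 1
  norm_num at this ⊢
  exact this

lemma tendsto_arsinh_diff (c₁ c₂ : ℝ) (h1 : 0 < c₁) (h2 : 0 < c₂) :
    Tendsto (fun L : ℝ => Real.arsinh (L / c₁) - Real.arsinh (L / c₂)) atTop
      (nhds (Real.log c₂ - Real.log c₁)) := by
  have hratio : Tendsto (fun L : ℝ =>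
      (L + Real.sqrt (L ^ 2 + c₁ ^ 2)) / (L + Real.sqrt (L ^ 2 + c₂ ^ 2))) atTop (nhds 1) := by
    have h := (tendsto_N c₁ h1).div (tendsto_N c₂ h2) (by norm_num)
    norm_num at h
    apply h.congr'
    filter_upwards [eventually_gt_atTop (0 : ℝ)] with L hL
    have key : ∀ c : ℝ, 0 < c → L + Real.sqrt (L ^ 2 + c ^ 2)
        = L * (1 + Real.sqrt (1 + (c / L) ^ 2)) := by
      intro c hc
      have : Real.sqrt (L ^ 2 + c ^ 2) = L * Real.sqrt (1 + (c / L) ^ 2) := by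
        rw [← Real.sqrt_sq hL.le, ← Real.sqrt_mul (by positivity)]
        congr 1
        field_simp
        exact Real.sq_sqrt (by positivity)
      rw [this]; ring
    simp only [Pi.div_apply]
    rw [key c₁ h1, key c₂ h2, mul_div_mul_left _ _ hL.ne']
  have hlog : Tendsto (fun L : ℝ =>
      Real.log (L + Real.sqrt (L ^ 2 + c₁ ^ 2)) - Real.log (L + Real.sqrt (L ^ 2 + c₂ ^ 2)))
      atTop (nhds 0) := by
    have h := ((Real.continuousAt_log one_ne_zero).tendsto).comp hratio
    rw [Real.log_one] at h
    apply h.congr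
    intro L
    simp only [Function.comp_apply]
    rw [Real.log_div (Npos c₁ h1 L).ne' (Npos c₂ h2 L).ne']
  have := hlog.add_const (Real.log c₂ - Real.log c₁)
  rw [zero_add] at this
  apply this.congr
  intro L
  rw [arsinh_log c₁ h1 L, arsinh_log c₂ h2 L]
  ring

lemma contf (c₁ c₂ : ℝ) (h1 : 0 < c₁) (h2 : 0 < c₂) :
    Continuous (fun u : ℝ => 1 / Real.sqrt (u ^ 2 + c₁ ^ 2) - 1 / Real.sqrt (u ^ 2 + c₂ ^ 2)) := by
  have key : ∀ c : ℝ, 0 < c → Continuous (fun u : ℝ => 1 / Real.sqrt (u ^ 2 + c ^ 2)) := by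
    intro c hc
    exact continuous_const.div (Real.continuous_sqrt.comp (by continuity))
      fun x => (sqrt_sq_add_pos c hc x).ne'
  exact (key c₁ h1).sub (key c₂ h2)

lemma integrable_f (c₁ c₂ : ℝ) (h1 : 0 < c₁) (h12 : c₁ ≤ c₂) :
    Integrable (fun s : ℝ => 1 / Real.sqrt (s ^ 2 + c₁ ^ 2) - 1 / Real.sqrt (s ^ 2 + c₂ ^ 2)) := by
  have h2 : (0:ℝ) < c₂ := lt_of_lt_of_le h1 h12
  set K : ℝ := (c₂ ^ 2 - c₁ ^ 2) / (2 * c₁ * min 1 (c₁ ^ 2)) with hK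
  apply (integrable_inv_one_add_sq.const_mul K).mono'
    ((contf c₁ c₂ h1 h2).aestronglyMeasurable)
  filter_upwards with s
  set sa := Real.sqrt (s ^ 2 + c₁ ^ 2) with hsa
  set sb := Real.sqrt (s ^ 2 + c₂ ^ 2) with hsb
  have hsa0 : 0 < sa := sqrt_sq_add_pos c₁ h1 s
  have hsb0 : 0 < sb := sqrt_sq_add_pos c₂ h2 s
  have hsa2 : sa ^ 2 = s ^ 2 + c₁ ^ 2 := Real.sq_sqrt (by positivity)
  have hsb2 : sb ^ 2 = s ^ 2 + c₂ ^ 2 := Real.sq_sqrt (by positivity)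
  have hab : sa ≤ sb := Real.sqrt_le_sqrt (by nlinarith)
  have hc1sa : c₁ ≤ sa := by
    have h := Real.sqrt_le_sqrt (show c₁ ^ 2 ≤ s ^ 2 + c₁ ^ 2 by nlinarith)
    rwa [Real.sqrt_sq h1.le] at h
  have hc1sb : c₁ ≤ sb := hc1sa.trans hab
  have hnn : 0 ≤ 1 / sa - 1 / sb := by
    rw [sub_nonneg]
    exact one_div_le_one_div_of_le hsa0 hab
  rw [Real.norm_eq_abs, abs_of_nonneg hnn]
  have key : 1 / sa - 1 / sb = (c₂ ^ 2 - c₁ ^ 2) / (sa * sb * (sa + sb)) := by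
    have hdiff : c₂ ^ 2 - c₁ ^ 2 = sb ^ 2 - sa ^ 2 := by rw [hsa2, hsb2]; ring
    rw [div_sub_div _ _ hsa0.ne' hsb0.ne', div_eq_div_iff (by positivity) (by positivity), hdiff]
    ring
  rw [key]
  have hmin : 0 < min 1 (c₁ ^ 2) := by positivity
  have hKnn : 0 ≤ c₂ ^ 2 - c₁ ^ 2 := by nlinarith
  have hrhs : K * (1 + s ^ 2)⁻¹
      = (c₂ ^ 2 - c₁ ^ 2) / (2 * c₁ * min 1 (c₁ ^ 2) * (1 + s ^ 2)) := by
    rw [hK]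
    field_simp
  rw [hrhs]
  apply div_le_div_of_nonneg_left hKnn (by positivity)
  have hden : (min 1 (c₁ ^ 2)) * (1 + s ^ 2) ≤ s ^ 2 + c₁ ^ 2 := by
    rcases min_cases 1 (c₁ ^ 2) with ⟨hm, hle⟩ | ⟨hm, hle⟩ <;> nlinarith
  have e1 : min 1 (c₁ ^ 2) * (1 + s ^ 2) ≤ sa ^ 2 := by rw [hsa2]; exact hden
  calc 2 * c₁ * min 1 (c₁ ^ 2) * (1 + s ^ 2)
      = (2 * c₁) * (min 1 (c₁ ^ 2) * (1 + s ^ 2)) := by ring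
    _ ≤ (2 * c₁) * sa ^ 2 := by
        exact mul_le_mul_of_nonneg_left e1 (by positivity)
    _ = (c₁ * sa) * (2 * sa) := by ring
    _ ≤ (sb * sa) * (sa + sb) := by
        exact mul_le_mul (mul_le_mul_of_nonneg_right hc1sb hsa0.le) (by linarith)
          (by positivity) (by positivity)
    _ = sa * sb * (sa + sb) := by ring

lemma inner_eval (c₁ c₂ : ℝ) (h1 : 0 < c₁) (h2 : 0 < c₂) (s A : ℝ) :
    (∫ t in (-A)..A, (1 / Real.sqrt ((s - t) ^ 2 + c₁ ^ 2)
        - 1 / Real.sqrt ((s - t) ^ 2 + c₂ ^ 2)))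
    = (Real.arsinh ((s - A) / c₂) - Real.arsinh ((s - A) / c₁))
      - (Real.arsinh ((s + A) / c₂) - Real.arsinh ((s + A) / c₁)) := by
  have hd : ∀ t : ℝ, HasDerivAt
      (fun t : ℝ => Real.arsinh ((s - t) / c₂) - Real.arsinh ((s - t) / c₁))
      (1 / Real.sqrt ((s - t) ^ 2 + c₁ ^ 2) - 1 / Real.sqrt ((s - t) ^ 2 + c₂ ^ 2)) t := by
    intro t
    have hin : HasDerivAt (fun t : ℝ => s - t) (-1) t := by
      simpa using (hasDerivAt_id t).const_sub s
    have d2 := (hda c₂ h2 (s - t)).comp t hin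
    have d1 := (hda c₁ h1 (s - t)).comp t hin
    refine (d2.sub d1).congr_deriv (Eq.symm ?_)
    ring
  have := intervalIntegral.integral_eq_sub_of_hasDerivAt (a := -A) (b := A)
    (fun t _ => hd t)
    (((contf c₁ c₂ h1 h2).comp (continuous_const.sub continuous_id)).intervalIntegrable _ _)
  rw [this]
  have e2 : s - -A = s + A := by ring
  rw [e2]

lemma outer_eval (c₁ c₂ : ℝ) (h1 : 0 < c₁) (h2 : 0 < c₂) (A : ℝ) :
    (∫ s in (-A)..A, ∫ t in (-A)..A,
        (1 / Real.sqrt ((s - t) ^ 2 + c₁ ^ 2) - 1 / Real.sqrt ((s - t) ^ 2 + c₂ ^ 2)))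
    = 2 * c₁ - 2 * c₂
      + 2 * ((2 * A) * Real.arsinh ((2 * A) / c₁) - Real.sqrt ((2 * A) ^ 2 + c₁ ^ 2))
      - 2 * ((2 * A) * Real.arsinh ((2 * A) / c₂) - Real.sqrt ((2 * A) ^ 2 + c₂ ^ 2)) := by
  simp only [inner_eval c₁ c₂ h1 h2]
  set G : ℝ → ℝ → ℝ := fun c u => u * Real.arsinh (u / c) - Real.sqrt (u ^ 2 + c ^ 2) with hG
  have hd : ∀ x : ℝ, HasDerivAt
      (fun s : ℝ => (G c₂ (s - A) - G c₁ (s - A)) - (G c₂ (s + A) - G c₁ (s + A)))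
      ((Real.arsinh ((x - A) / c₂) - Real.arsinh ((x - A) / c₁))
        - (Real.arsinh ((x + A) / c₂) - Real.arsinh ((x + A) / c₁))) x := by
    intro x
    have hsub : HasDerivAt (fun s : ℝ => s - A) 1 x := (hasDerivAt_id x).sub_const A
    have hadd : HasDerivAt (fun s : ℝ => s + A) 1 x := (hasDerivAt_id x).add_const A
    have d1 := (hdG c₂ h2 (x - A)).comp x hsub
    have d2 := (hdG c₁ h1 (x - A)).comp x hsub
    have d3 := (hdG c₂ h2 (x + A)).comp x hadd
    have d4 := (hdG c₁ h1 (x + A)).comp x hadd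
    refine ((d1.sub d2).sub (d3.sub d4)).congr_deriv (Eq.symm ?_)
    ring
  have hcont : Continuous (fun x : ℝ =>
      (Real.arsinh ((x - A) / c₂) - Real.arsinh ((x - A) / c₁))
        - (Real.arsinh ((x + A) / c₂) - Real.arsinh ((x + A) / c₁))) := by
    have h : ∀ c : ℝ, Continuous (fun x : ℝ => Real.arsinh ((x - A) / c)) := fun c =>
      Real.continuous_arsinh.comp ((continuous_id.sub continuous_const).div_const c)
    have h' : ∀ c : ℝ, Continuous (fun x : ℝ => Real.arsinh ((x + A) / c)) := fun c =>
      Real.continuous_arsinh.comp ((continuous_id.add continuous_const).div_const c)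
    exact ((h c₂).sub (h c₁)).sub ((h' c₂).sub (h' c₁))
  rw [intervalIntegral.integral_eq_sub_of_hasDerivAt (fun x _ => hd x)
    (hcont.intervalIntegrable _ _)]
  have eA : A - A = 0 := by ring
  have eA2 : A + A = 2 * A := by ring
  have eA3 : -A - A = -(2 * A) := by ring
  have eA4 : -A + A = 0 := by ring
  rw [eA, eA2, eA3, eA4]
  have hG0 : ∀ c : ℝ, 0 < c → G c 0 = -c := by
    intro c hc
    simp [hG, Real.sqrt_sq hc.le]
  have hGeven : ∀ c : ℝ, G c (-(2 * A)) = G c (2 * A) := by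
    intro c
    simp only [hG, neg_div, Real.arsinh_neg, neg_sq]
    ring
  rw [hG0 c₁ h1, hG0 c₂ h2, hGeven c₁, hGeven c₂]
  simp only [hG]
  ring

/-- Limit of the modified stripe interaction per unit mass. -/
theorem stmt14 (a l : ℝ) (ha : 0 < a) (hl : 0 < l) :
    (a * ∫ s : ℝ, (1 / Real.sqrt (s ^ 2 + l ^ 2)
          - 1 / Real.sqrt (s ^ 2 + 1 / a ^ 2 + l ^ 2))
        = -2 * a * Real.log l + a * Real.log (1 / a ^ 2 + l ^ 2)) ∧
    Tendsto
      (fun m : ℝ => (1 / m) *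
        ∫ s in (-(a * m) / 2)..(a * m / 2), ∫ t in (-(a * m) / 2)..(a * m / 2),
          (1 / Real.sqrt ((s - t) ^ 2 + l ^ 2)
            - 1 / Real.sqrt ((s - t) ^ 2 + 1 / a ^ 2 + l ^ 2)))
      atTop
      (nhds (-2 * a * Real.log l + a * Real.log (1 / a ^ 2 + l ^ 2))) := by
  set c₂ : ℝ := Real.sqrt (1 / a ^ 2 + l ^ 2) with hc2def
  have hc2sq : c₂ ^ 2 = 1 / a ^ 2 + l ^ 2 := Real.sq_sqrt (by positivity)
  have hc2pos : 0 < c₂ := Real.sqrt_pos.2 (by positivity)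
  have hle : l ≤ c₂ := by
    have h := Real.sqrt_le_sqrt (show l ^ 2 ≤ 1 / a ^ 2 + l ^ 2 from
      le_add_of_nonneg_left (by positivity))
    rwa [Real.sqrt_sq hl.le] at h
  have harg : ∀ u : ℝ, u ^ 2 + 1 / a ^ 2 + l ^ 2 = u ^ 2 + c₂ ^ 2 := by
    intro u; rw [hc2sq]; ring
  have hlogval : Real.log (1 / a ^ 2 + l ^ 2) = 2 * Real.log c₂ := by
    rw [← hc2sq, Real.log_pow]
    norm_num
  -- Part 1
  have hInt := integrable_f l c₂ hl hle
  have part1 : a * ∫ s : ℝ, (1 / Real.sqrt (s ^ 2 + l ^ 2)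
      - 1 / Real.sqrt (s ^ 2 + 1 / a ^ 2 + l ^ 2))
      = -2 * a * Real.log l + a * Real.log (1 / a ^ 2 + l ^ 2) := by
    have hintval : (∫ s : ℝ, (1 / Real.sqrt (s ^ 2 + l ^ 2)
        - 1 / Real.sqrt (s ^ 2 + c₂ ^ 2))) = 2 * (Real.log c₂ - Real.log l) := by
      have h1 : Tendsto (fun L : ℝ => ∫ s in (-L)..L,
          (1 / Real.sqrt (s ^ 2 + l ^ 2) - 1 / Real.sqrt (s ^ 2 + c₂ ^ 2))) atTop
          (nhds (∫ s : ℝ, (1 / Real.sqrt (s ^ 2 + l ^ 2) - 1 / Real.sqrt (s ^ 2 + c₂ ^ 2)))) :=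
        intervalIntegral_tendsto_integral hInt tendsto_neg_atTop_atBot tendsto_id
      have hFTC : ∀ L : ℝ, ∫ s in (-L)..L,
          (1 / Real.sqrt (s ^ 2 + l ^ 2) - 1 / Real.sqrt (s ^ 2 + c₂ ^ 2))
          = (Real.arsinh (L / l) - Real.arsinh (L / c₂))
            - (Real.arsinh (-L / l) - Real.arsinh (-L / c₂)) := by
        intro L
        exact intervalIntegral.integral_eq_sub_of_hasDerivAt
          (fun x _ => (hda l hl x).sub (hda c₂ hc2pos x))
          ((contf l c₂ hl hc2pos).intervalIntegrable _ _)
      have h2 : Tendsto (fun L : ℝ => (Real.arsinh (L / l) - Real.arsinh (L / c₂))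
          - (Real.arsinh (-L / l) - Real.arsinh (-L / c₂))) atTop
          (nhds (2 * (Real.log c₂ - Real.log l))) := by
        have h := (tendsto_arsinh_diff l c₂ hl hc2pos).const_mul 2
        apply h.congr
        intro L
        simp only [neg_div, Real.arsinh_neg]
        ring
      have h1' := h1.congr (fun L => (hFTC L))
      exact tendsto_nhds_unique h1' h2
    calc a * ∫ s : ℝ, (1 / Real.sqrt (s ^ 2 + l ^ 2)
          - 1 / Real.sqrt (s ^ 2 + 1 / a ^ 2 + l ^ 2))
        = a * ∫ s : ℝ, (1 / Real.sqrt (s ^ 2 + l ^ 2) - 1 / Real.sqrt (s ^ 2 + c₂ ^ 2)) := by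
          congr 1
          apply MeasureTheory.integral_congr_ae
          filter_upwards with s
          rw [harg s]
      _ = a * (2 * (Real.log c₂ - Real.log l)) := by rw [hintval]
      _ = -2 * a * Real.log l + a * Real.log (1 / a ^ 2 + l ^ 2) := by
          rw [hlogval]; ring
  refine ⟨part1, ?_⟩
  -- Part 2
  set T : ℝ → ℝ := fun m => (2 * l - 2 * c₂) * (1 / m)
      + 2 * a * (Real.arsinh (a * m / l) - Real.arsinh (a * m / c₂))
      + (Real.sqrt ((a * m) ^ 2 + c₂ ^ 2) - Real.sqrt ((a * m) ^ 2 + l ^ 2)) * (2 / m)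
    with hT
  have t1 : Tendsto (fun m : ℝ => (2 * l - 2 * c₂) * (1 / m)) atTop (nhds 0) := by
    have := tendsto_inv_atTop_zero.const_mul (2 * l - 2 * c₂)
    simpa [one_div] using this
  have hAm : Tendsto (fun m : ℝ => a * m) atTop atTop :=
    Tendsto.const_mul_atTop ha tendsto_id
  have t2 : Tendsto (fun m : ℝ =>
      2 * a * (Real.arsinh (a * m / l) - Real.arsinh (a * m / c₂))) atTop
      (nhds (2 * a * (Real.log c₂ - Real.log l))) := by
    have h := ((tendsto_arsinh_diff l c₂ hl hc2pos).comp hAm).const_mul (2 * a)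
    exact h
  have t3 : Tendsto (fun m : ℝ =>
      (Real.sqrt ((a * m) ^ 2 + c₂ ^ 2) - Real.sqrt ((a * m) ^ 2 + l ^ 2)) * (2 / m)) atTop
      (nhds 0) := by
    have hbound : Tendsto (fun m : ℝ => ((c₂ ^ 2 - l ^ 2) / a) * (m ^ 2)⁻¹) atTop (nhds 0) := by
      have h := (tendsto_pow_atTop (n := 2) (by norm_num) :
        Tendsto (fun m : ℝ => m ^ 2) atTop atTop).inv_tendsto_atTop
      have := h.const_mul ((c₂ ^ 2 - l ^ 2) / a)
      simpa using this
    apply tendsto_of_tendsto_of_tendsto_of_le_of_le' tendsto_const_nhds hbound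
    · filter_upwards [eventually_gt_atTop (0 : ℝ)] with m hm
      have hab : Real.sqrt ((a * m) ^ 2 + l ^ 2) ≤ Real.sqrt ((a * m) ^ 2 + c₂ ^ 2) :=
        Real.sqrt_le_sqrt (by nlinarith)
      exact mul_nonneg (by linarith) (by positivity)
    · filter_upwards [eventually_gt_atTop (0 : ℝ)] with m hm
      set sa := Real.sqrt ((a * m) ^ 2 + l ^ 2) with hsa
      set sb := Real.sqrt ((a * m) ^ 2 + c₂ ^ 2) with hsb
      have ham : 0 < a * m := by positivity
      have hsa0 : 0 < sa := sqrt_sq_add_pos l hl (a * m)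
      have hsb0 : 0 < sb := sqrt_sq_add_pos c₂ hc2pos (a * m)
      have hsa2 : sa ^ 2 = (a * m) ^ 2 + l ^ 2 := Real.sq_sqrt (by positivity)
      have hsb2 : sb ^ 2 = (a * m) ^ 2 + c₂ ^ 2 := Real.sq_sqrt (by positivity)
      have hab : sa ≤ sb := Real.sqrt_le_sqrt (by nlinarith)
      have hamsa : a * m ≤ sa := by
        have h := Real.sqrt_le_sqrt (show (a * m) ^ 2 ≤ (a * m) ^ 2 + l ^ 2 by nlinarith)
        rwa [Real.sqrt_sq ham.le] at h
      have hamsb : a * m ≤ sb := hamsa.trans hab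
      have key2 : (sb - sa) * (sa + sb) = c₂ ^ 2 - l ^ 2 := by
        have : (sb - sa) * (sa + sb) = sb ^ 2 - sa ^ 2 := by ring
        rw [this, hsa2, hsb2]; ring
      have key : (sb - sa) * (2 * (a * m)) ≤ c₂ ^ 2 - l ^ 2 := by
        rw [← key2]
        exact mul_le_mul_of_nonneg_left (by linarith) (by linarith)
      rw [show (sb - sa) * (2 / m) = ((sb - sa) * (2 * (a * m))) / (a * m ^ 2) by
          field_simp,
        show ((c₂ ^ 2 - l ^ 2) / a) * (m ^ 2)⁻¹ = (c₂ ^ 2 - l ^ 2) / (a * m ^ 2) by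
          field_simp]
      exact (div_le_div_iff_of_pos_right (by positivity)).2 key
  have hTlim : Tendsto T atTop (nhds (2 * a * (Real.log c₂ - Real.log l))) := by
    have h := (t1.add t2).add t3
    rw [hT]
    simpa using h
  rw [show -2 * a * Real.log l + a * Real.log (1 / a ^ 2 + l ^ 2)
      = 2 * a * (Real.log c₂ - Real.log l) from by rw [hlogval]; ring]
  apply hTlim.congr'
  filter_upwards [eventually_gt_atTop (0 : ℝ)] with m hm
  have hb : -(a * m) / 2 = -(a * m / 2) := by ring
  simp only [harg]
  rw [hb, outer_eval l c₂ hl hc2pos (a * m / 2),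
    show 2 * (a * m / 2) = a * m from by ring, hT]
  field_simp
  ring
end
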